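/- Let X, Y ∈ ℤ^{n×n} be symmetric, ζ, η ∈ ℤⁿ, and let Q be a rational orthogonal matrix with Q X Qᵀ = Y and Q ζ = η, of level ℓ. Let p be a prime with p ∣ ℓ and rank_p(W_{X,ζ}) = n−1. Suppose β, φ₁, φ₂ ∈ 𝔽_p[λ] satisfy gcd(φ₁, φ₂) = 1 and that the reduction modulo p of Φ_{X,ζ}(λ,t) = det(λI − X − t·ζζᵀ) equals β(λ)·(φ₁(λ) + t·φ₂(λ)) in 𝔽_p[λ,t]. Then β has exactly one root in 𝔽_p: there exists λ₀ ∈ 𝔽_p with β(λ₀) = 0, and every λ₁ ∈ 𝔽_p with β(λ₁) = 0 equals λ₀. -/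

import Mathlib

open Matrix Polynomial

/-- The walk matrix `[ζ, Xζ, X²ζ, …, X^{n−1}ζ]`: its `j`-th column is `X^j ζ`. -/
def walkMatrix {n : ℕ} {R : Type*} [CommRing R]
    (X : Matrix (Fin n) (Fin n) R) (ζ : Fin n → R) : Matrix (Fin n) (Fin n) R :=
  Matrix.of fun i j => ((X ^ (j : ℕ)) *ᵥ ζ) i

/-- `ℓ` is the level of the rational matrix `Q`: the least positive integer such that
`ℓ • Q` has integer entries. -/
def IsLevel {n : ℕ} (Q : Matrix (Fin n) (Fin n) ℚ) (ℓ : ℕ) : Prop :=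
  (0 < ℓ ∧ ∀ i j, ∃ z : ℤ, (ℓ : ℚ) * Q i j = (z : ℚ)) ∧
    ∀ m : ℕ, 0 < m → (∀ i j, ∃ z : ℤ, (m : ℚ) * Q i j = (z : ℚ)) → ℓ ≤ m

/-- The bivariate polynomial `Φ_{X,ζ}(λ,t) = det(λI − X − t·ζζᵀ)`, as an element of
`(ℤ[t])[λ]`: the outer variable is `λ` and the inner variable is `t`. -/
noncomputable def PhiPoly {n : ℕ} (X : Matrix (Fin n) (Fin n) ℤ) (ζ : Fin n → ℤ) :
    Polynomial (Polynomial ℤ) :=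
  ((Polynomial.X : Polynomial (Polynomial ℤ)) •
      (1 : Matrix (Fin n) (Fin n) (Polynomial (Polynomial ℤ)))
    - X.map (fun a => Polynomial.C (Polynomial.C a))
    - Polynomial.C (Polynomial.X : Polynomial ℤ) •
        (vecMulVec ζ ζ).map (fun a => Polynomial.C (Polynomial.C a))).det

lemma phi_eval {n : ℕ} {F : Type*} [Field F] (X : Matrix (Fin n) (Fin n) ℤ) (ζ : Fin n → ℤ)
    (a s : F) :
    ((PhiPoly X ζ).map (Polynomial.mapRingHom (Int.castRingHom F))).evalEval s a =
      (a • (1 : Matrix (Fin n) (Fin n) F) - X.map (Int.cast : ℤ → F)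
        - s • vecMulVec (fun i => ((ζ i : ℤ) : F)) (fun i => ((ζ i : ℤ) : F))).det := by
  have hc : ∀ z : ℤ, Polynomial.eval₂ (eval₂RingHom (Int.castRingHom F) s) a
      ((z : Polynomial (Polynomial ℤ))) = (z : F) := fun z => by
    rw [← Polynomial.coe_eval₂RingHom]; exact map_intCast _ z
  rw [← Polynomial.eval₂_eval₂RingHom_apply, PhiPoly]
  rw [← Polynomial.coe_eval₂RingHom]
  rw [RingHom.map_det]
  congr 1
  ext i j
  simp [Matrix.sub_apply, Matrix.smul_apply, Matrix.one_apply, Matrix.map_apply,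
    vecMulVec_apply, smul_eq_mul, apply_ite, mul_one, mul_zero, hc]

lemma mapC_evalEval {F : Type*} [CommRing F] (q : Polynomial F) (a s : F) :
    (q.map (Polynomial.C : F →+* Polynomial F)).evalEval s a = q.eval a := by
  rw [Polynomial.evalEval, Polynomial.eval_map, Polynomial.eval₂_hom, Polynomial.eval_C]

lemma dot_mulVec_symm {n : ℕ} {F : Type*} [CommRing F] {B : Matrix (Fin n) (Fin n) F}
    (hB : B.IsSymm) (u w : Fin n → F) : (B *ᵥ u) ⬝ᵥ w = u ⬝ᵥ (B *ᵥ w) := by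
  calc (B *ᵥ u) ⬝ᵥ w = (Bᵀ *ᵥ u) ⬝ᵥ w := by rw [hB]
    _ = (u ᵥ* B) ⬝ᵥ w := by rw [Matrix.mulVec_transpose]
    _ = u ⬝ᵥ (B *ᵥ w) := (Matrix.dotProduct_mulVec u B w).symm

lemma vecMulVec_mulVec' {n : ℕ} {F : Type*} [CommRing F] (u w x : Fin n → F) :
    vecMulVec u w *ᵥ x = (w ⬝ᵥ x) • u := by
  funext i
  simp only [Matrix.mulVec, dotProduct, vecMulVec_apply, Pi.smul_apply, smul_eq_mul,
    Finset.sum_mul]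
  exact Finset.sum_congr rfl fun j _ => by ring

lemma dot_sum_mulVec {n : ℕ} {F : Type*} [CommRing F] (t : Finset ℕ)
    (M : ℕ → Matrix (Fin n) (Fin n) F) (c : ℕ → F) (v w : Fin n → F) :
    v ⬝ᵥ ((∑ j ∈ t, c j • M j) *ᵥ w) = ∑ j ∈ t, c j * (v ⬝ᵥ (M j *ᵥ w)) := by
  classical
  induction t using Finset.induction with
  | empty => simp
  | insert _ _ h ih =>
      rw [Finset.sum_insert h, Finset.sum_insert h, Matrix.add_mulVec, dotProduct_add, ih]
      congr 1
      rw [Matrix.smul_mulVec, dotProduct_smul, smul_eq_mul]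

lemma pow_card_eq_sum {n : ℕ} {F : Type*} [Field F] (B : Matrix (Fin n) (Fin n) F) :
    ∃ c : ℕ → F, B ^ n = ∑ j ∈ Finset.range n, c j • B ^ j := by
  rcases Nat.eq_zero_or_pos n with h | h
  · exact ⟨fun _ => 0, by subst h; simp [pow_zero]; exact Subsingleton.elim _ _⟩
  have : Nontrivial F := inferInstance
  have hch := B.aeval_self_charpoly
  rw [Polynomial.aeval_eq_sum_range] at hch
  rw [Matrix.charpoly_natDegree_eq_dim, Fintype.card_fin] at hch
  rw [Finset.sum_range_succ] at hch
  have hm : B.charpoly.coeff n = 1 := by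
    have := (Matrix.charpoly_monic B).coeff_natDegree
    rwa [Matrix.charpoly_natDegree_eq_dim, Fintype.card_fin] at this
  rw [hm, one_smul] at hch
  refine ⟨fun j => -(B.charpoly.coeff j), ?_⟩
  have := eq_neg_of_add_eq_zero_right hch
  rw [this, ← Finset.sum_neg_distrib]
  exact Finset.sum_congr rfl fun j _ => (neg_smul _ _).symm

/-- **Lemma.** Suppose `Q` is a rational orthogonal matrix with `Q X Qᵀ = Y`, `Q ζ = η`, of
level `ℓ`, `p ∣ ℓ`, `rank_p(W_{X,ζ}) = n − 1`, and `Φ_{X,ζ} ≡ β(λ)(φ₁(λ) + t φ₂(λ)) mod p`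
with `gcd(φ₁, φ₂) = 1`. Then `β` has exactly one root in `𝔽_p`. -/
theorem beta_has_exactly_one_root
    {n : ℕ} (X Y : Matrix (Fin n) (Fin n) ℤ) (ζ η : Fin n → ℤ)
    (hXsymm : X.IsSymm) (hYsymm : Y.IsSymm)
    (Q : Matrix (Fin n) (Fin n) ℚ)
    (hQ : Qᵀ * Q = 1)
    (hQX : Q * X.map (Int.cast : ℤ → ℚ) * Qᵀ = Y.map (Int.cast : ℤ → ℚ))
    (hQζ : Q *ᵥ (fun i => (ζ i : ℚ)) = fun i => (η i : ℚ))
    (ℓ : ℕ) (hℓ : IsLevel Q ℓ)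
    (p : ℕ) (hp : p.Prime) [Fact p.Prime] (hpℓ : p ∣ ℓ)
    (hrank : ((walkMatrix X ζ).map (Int.cast : ℤ → ZMod p)).rank = n - 1)
    (β φ₁ φ₂ : Polynomial (ZMod p)) (hgcd : IsCoprime φ₁ φ₂)
    (hdecomp : (PhiPoly X ζ).map (Polynomial.mapRingHom (Int.castRingHom (ZMod p))) =
      β.map (Polynomial.C : ZMod p →+* Polynomial (ZMod p)) *
        (φ₁.map (Polynomial.C : ZMod p →+* Polynomial (ZMod p)) +
          Polynomial.C (Polynomial.X : Polynomial (ZMod p)) *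
            φ₂.map (Polynomial.C : ZMod p →+* Polynomial (ZMod p)))) :
    ∃ lam₀ : ZMod p, β.IsRoot lam₀ ∧ ∀ lam₁ : ZMod p, β.IsRoot lam₁ → lam₁ = lam₀ := by
  rcases Nat.eq_zero_or_pos n with hn0 | hn
  · -- n = 0 : the level is 1 and p ∣ 1, contradiction
    exfalso
    subst hn0
    have h1 : ℓ ≤ 1 := hℓ.2 1 one_pos (fun i => i.elim0)
    have hℓ1 : ℓ = 1 := le_antisymm h1 hℓ.1.1
    rw [hℓ1, Nat.dvd_one] at hpℓ
    exact hp.one_lt.ne' hpℓ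
  -- main case : n ≥ 1
  set F := ZMod p
  set Xb : Matrix (Fin n) (Fin n) F := X.map (Int.cast : ℤ → F) with hXb
  set ζb : Fin n → F := fun i => ((ζ i : ℤ) : F) with hζb
  have hXbs : Xb.IsSymm := hXsymm.map _
  have hpow : ∀ j : ℕ, Xb ^ j = (X ^ j).map (Int.cast : ℤ → F) := by
    intro j
    have := map_pow ((Int.castRingHom F).mapMatrix) X j
    simpa [RingHom.mapMatrix_apply] using this.symm
  have hW : (walkMatrix X ζ).map (Int.cast : ℤ → F) = walkMatrix Xb ζb := by
    ext i j
    simp only [walkMatrix, Matrix.map_apply, Matrix.of_apply, hpow, Matrix.mulVec,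
      dotProduct, hζb]
    push_cast
    exact (Int.cast_sum _ _).trans (Finset.sum_congr rfl fun _ _ => Int.cast_mul _ _)
  set W : Matrix (Fin n) (Fin n) F := walkMatrix Xb ζb with hWdef
  have hrank' : W.rank = n - 1 := by rw [← hW]; exact hrank
  -- the kernel of Wᵀ is one-dimensional
  have hker : Module.finrank F (LinearMap.ker (Wᵀ.mulVecLin)) = 1 := by
    have h1 := LinearMap.finrank_range_add_finrank_ker (Wᵀ.mulVecLin)
    rw [Module.finrank_fintype_fun_eq_card, Fintype.card_fin] at h1
    have h2 : Wᵀ.rank = n - 1 := by rw [Matrix.rank_transpose]; exact hrank'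
    rw [Matrix.rank] at h2
    omega
  -- a nonzero kernel vector v
  have hne : LinearMap.ker (Wᵀ.mulVecLin) ≠ ⊥ := by
    intro h
    rw [h, finrank_bot] at hker
    exact zero_ne_one hker
  obtain ⟨v, hvmem, hv0⟩ := Submodule.exists_mem_ne_zero_of_ne_bot hne
  have hvker : Wᵀ *ᵥ v = 0 := hvmem
  -- kernel membership as dot products with the Krylov vectors
  have hcol : ∀ (w : Fin n → F) (j : Fin n), (Wᵀ *ᵥ w) j = w ⬝ᵥ (Xb ^ (j : ℕ) *ᵥ ζb) := by
    intro w j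
    simp only [hWdef, walkMatrix, Matrix.mulVec, dotProduct, Matrix.transpose_apply,
      Matrix.of_apply]
    exact Finset.sum_congr rfl fun i _ => mul_comm _ _
  have memker : ∀ w : Fin n → F,
      (Wᵀ *ᵥ w = 0) ↔ ∀ j : Fin n, w ⬝ᵥ (Xb ^ (j : ℕ) *ᵥ ζb) = 0 := by
    intro w
    rw [funext_iff]
    exact ⟨fun h j => (hcol w j) ▸ h j, fun h j => by rw [hcol w j]; exact h j⟩
  have hvdot : ∀ j : Fin n, v ⬝ᵥ (Xb ^ (j : ℕ) *ᵥ ζb) = 0 := (memker v).mp hvker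
  -- Cayley–Hamilton : the dot product also vanishes at exponent n
  obtain ⟨c, hc⟩ := pow_card_eq_sum Xb
  have hdotn : ∀ w : Fin n → F, (∀ j : Fin n, w ⬝ᵥ (Xb ^ (j : ℕ) *ᵥ ζb) = 0) →
      w ⬝ᵥ (Xb ^ n *ᵥ ζb) = 0 := by
    intro w hw
    rw [hc, dot_sum_mulVec]
    refine Finset.sum_eq_zero fun j hj => ?_
    have := hw ⟨j, Finset.mem_range.mp hj⟩
    simp only [Fin.val_mk] at this
    rw [this, mul_zero]
  -- every kernel vector of Wᵀ is an eigenvector candidate: first, Xb *ᵥ v ∈ ker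
  have hstep : ∀ w : Fin n → F, Wᵀ *ᵥ w = 0 → Wᵀ *ᵥ (Xb *ᵥ w) = 0 := by
    intro w hw
    rw [memker]
    intro j
    rw [dot_mulVec_symm hXbs, Matrix.mulVec_mulVec, ← pow_succ']
    rcases lt_or_eq_of_le (Nat.succ_le_of_lt j.isLt) with hlt | heq
    · have := (memker w).mp hw ⟨(j : ℕ) + 1, hlt⟩
      simpa using this
    · rw [show ((j : ℕ) + 1) = n from heq]
      exact hdotn w ((memker w).mp hw)
  -- the eigenvalue lam₀
  have hspan : ∀ w : Fin n → F, Wᵀ *ᵥ w = 0 → ∃ d : F, d • v = w := by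
    intro w hw
    obtain ⟨d, hd⟩ := (finrank_eq_one_iff_of_nonzero'
      (⟨v, hvmem⟩ : LinearMap.ker (Wᵀ.mulVecLin))
      (by simpa [Subtype.ext_iff] using hv0)).mp hker ⟨w, hw⟩
    exact ⟨d, congrArg Subtype.val hd⟩
  obtain ⟨lam₀, hlam⟩ := hspan (Xb *ᵥ v) (hstep v hvker)
  -- ζb is orthogonal to v
  have hζv : ζb ⬝ᵥ v = 0 := by
    have := hvdot ⟨0, hn⟩
    rw [dotProduct_comm]
    simpa [Matrix.one_mulVec] using this
  -- pointwise determinant identity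
  have hpoint : ∀ a s : F,
      (a • (1 : Matrix (Fin n) (Fin n) F) - Xb - s • vecMulVec ζb ζb).det =
        β.eval a * (φ₁.eval a + s * φ₂.eval a) := by
    intro a s
    have h1 := congrArg (Polynomial.evalEval s a) hdecomp
    rw [phi_eval] at h1
    rw [hXb, hζb]
    rw [h1, ← Polynomial.coe_evalEvalRingHom, _root_.map_mul, _root_.map_add, _root_.map_mul,
      Polynomial.coe_evalEvalRingHom,
      mapC_evalEval, mapC_evalEval, mapC_evalEval, Polynomial.evalEval_C, Polynomial.eval_X]
  -- existence : lam₀ is a root of β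
  have hdet0 : ∀ s : F,
      (lam₀ • (1 : Matrix (Fin n) (Fin n) F) - Xb - s • vecMulVec ζb ζb).det = 0 := by
    intro s
    rw [← Matrix.exists_mulVec_eq_zero_iff]
    refine ⟨v, hv0, ?_⟩
    rw [Matrix.sub_mulVec, Matrix.sub_mulVec, Matrix.smul_mulVec, Matrix.one_mulVec,
      Matrix.smul_mulVec, vecMulVec_mulVec', hζv, ← hlam]
    simp
  have hβ0 : β.eval lam₀ = 0 := by
    by_contra hβ
    have h0 := hpoint lam₀ 0
    rw [hdet0 0] at h0
    have h1 := hpoint lam₀ 1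
    rw [hdet0 1] at h1
    simp only [zero_mul, add_zero, one_mul] at h0 h1
    have hφ1 : φ₁.eval lam₀ = 0 := by
      rcases mul_eq_zero.mp h0.symm with h | h
      · exact absurd h hβ
      · exact h
    have hφ2 : φ₂.eval lam₀ = 0 := by
      rcases mul_eq_zero.mp h1.symm with h | h
      · exact absurd h hβ
      · rw [hφ1, zero_add] at h; exact h
    obtain ⟨u₁, u₂, hu⟩ := hgcd
    have := congrArg (Polynomial.eval lam₀) hu
    simp [hφ1, hφ2] at this
  refine ⟨lam₀, hβ0, ?_⟩
  -- uniqueness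
  intro a ha
  have ha' : β.eval a = 0 := ha
  have h0 := hpoint a 0
  have h1 := hpoint a 1
  rw [ha', zero_mul] at h0 h1
  obtain ⟨x, hx0, hx⟩ := Matrix.exists_mulVec_eq_zero_iff.mpr h0
  obtain ⟨y, hy0, hy⟩ := Matrix.exists_mulVec_eq_zero_iff.mpr h1
  have hXx : Xb *ᵥ x = a • x := by
    have := hx
    rw [zero_smul, sub_zero, Matrix.sub_mulVec, Matrix.smul_mulVec,
      Matrix.one_mulVec, sub_eq_zero] at this
    exact this.symm
  have hXy : Xb *ᵥ y = a • y - (ζb ⬝ᵥ y) • ζb := by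
    have := hy
    rw [one_smul, Matrix.sub_mulVec, Matrix.sub_mulVec, Matrix.smul_mulVec,
      Matrix.one_mulVec, vecMulVec_mulVec', sub_sub, sub_eq_zero] at this
    rw [this, add_sub_cancel_right]
  have key : ∃ z : Fin n → F, z ≠ 0 ∧ Xb *ᵥ z = a • z ∧ ζb ⬝ᵥ z = 0 := by
    by_cases hxz : ζb ⬝ᵥ x = 0
    · exact ⟨x, hx0, hXx, hxz⟩
    by_cases hyz : ζb ⬝ᵥ y = 0
    · exact ⟨y, hy0, by rw [hXy, hyz, zero_smul, sub_zero], hyz⟩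
    exfalso
    have e1 : (Xb *ᵥ x) ⬝ᵥ y = x ⬝ᵥ (Xb *ᵥ y) := dot_mulVec_symm hXbs x y
    simp only [hXx, hXy, smul_dotProduct, dotProduct_sub, dotProduct_smul, smul_eq_mul] at e1
    have : (ζb ⬝ᵥ y) * (x ⬝ᵥ ζb) = 0 := sub_eq_self.mp e1.symm
    rcases mul_eq_zero.mp this with h | h
    · exact hyz h
    · exact hxz (by rwa [dotProduct_comm] at h)
  obtain ⟨z, hz0, hzX, hzζ⟩ := key
  have hzdot : ∀ k : ℕ, z ⬝ᵥ (Xb ^ k *ᵥ ζb) = 0 := by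
    intro k
    induction k with
    | zero => simpa [Matrix.one_mulVec, dotProduct_comm] using hzζ
    | succ k ih =>
        rw [pow_succ', ← Matrix.mulVec_mulVec, ← dot_mulVec_symm hXbs, hzX,
          smul_dotProduct, ih, smul_eq_mul, mul_zero]
  have hzker : Wᵀ *ᵥ z = 0 := (memker z).mpr fun j => hzdot j
  obtain ⟨d, hd⟩ := hspan z hzker
  have hd0 : d ≠ 0 := fun h => hz0 (by rw [← hd, h, zero_smul])
  have heq : Xb *ᵥ (d • v) = a • (d • v) := by rw [hd]; exact hzX
  rw [Matrix.mulVec_smul, ← hlam] at heq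
  have h3 : (d * lam₀) • v = (a * d) • v := by
    rw [mul_smul, mul_smul]; exact heq
  have h4 : (d * lam₀ - a * d) • v = 0 := by rw [sub_smul, h3, sub_self]
  rcases smul_eq_zero.mp h4 with h | h
  · have h5 : d * (lam₀ - a) = 0 := by linear_combination h
    rcases mul_eq_zero.mp h5 with h' | h'
    · exact absurd h' hd0
    · exact (sub_eq_zero.mp h').symm
  · exact absurd h hv0
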